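/- Let (A, m) be a Noetherian local domain, I_1, I_2, ... a sequence of nonzero ideals with lim_{n→∞} I_n = 0 in the m-adic topology, P = ∏_n A/I_n, and S̄ the m-adic closure of the direct sum S = ⊕_n A/I_n inside P. Then S̄ = {(a_n + I_n)_n ∈ P : a_n → 0 in the m-adic topology}, and P/S̄ is a flat A-module. -/

import Mathlib

universe u
section helpers
variable {A : Type u} [CommRing A]

lemma mem_smul_top_quot' {K J : Ideal A} {x : A ⧸ J} :
    x ∈ K • (⊤ : Submodule A (A ⧸ J)) ↔ ∃ y ∈ K, Submodule.Quotient.mk y = x := by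
  have hKtop : (K • (⊤ : Submodule A A)) = K := by
    rw [Ideal.smul_eq_mul, Ideal.mul_top]
  have hmap : Submodule.map J.mkQ (K • (⊤ : Submodule A A)) = K • (⊤ : Submodule A (A ⧸ J)) := by
    rw [Submodule.map_smul'', Submodule.map_top, Submodule.range_mkQ]
  constructor
  · intro hx
    rw [← hmap] at hx
    obtain ⟨y, hy, hyx⟩ := hx
    exact ⟨y, hKtop ▸ hy, hyx⟩
  · rintro ⟨y, hy, rfl⟩
    rw [← hmap]
    exact Submodule.mem_map_of_mem (hKtop.symm ▸ hy)

lemma pi_mem_smul {M : ℕ → Type v} [∀ n, AddCommGroup (M n)] [∀ n, Module A (M n)]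
    (J : Ideal A) (hJ : J.FG) (b : ∀ n, M n)
    (hb : ∀ n, b n ∈ J • (⊤ : Submodule A (M n))) :
    b ∈ J • (⊤ : Submodule A (∀ n, M n)) := by
  obtain ⟨s, hs⟩ := hJ
  have key : ∀ (n : ℕ) (x : M n), x ∈ J • (⊤ : Submodule A (M n)) →
      ∃ c : A → M n, x = ∑ a ∈ s, a • c a := by
    intro n x hx
    rw [← hs] at hx
    refine Submodule.smul_induction_on hx ?_ ?_
    · intro r hr m _
      obtain ⟨c, -, hc⟩ := Submodule.mem_span_finset.mp hr
      refine ⟨fun a => c a • m, ?_⟩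
      rw [← hc, Finset.sum_smul]
      exact Finset.sum_congr rfl fun a _ => by rw [smul_smul, smul_eq_mul, mul_comm]
    · rintro x y ⟨cx, hx⟩ ⟨cy, hy⟩
      exact ⟨cx + cy, by simp [hx, hy, Finset.sum_add_distrib, smul_add]⟩
  choose c hc using fun n => key n (b n) (hb n)
  have hb' : b = ∑ a ∈ s, a • (fun n => c n a) := by
    funext n
    rw [hc n]
    simp
  rw [hb']
  exact Submodule.sum_mem _ fun a ha =>
    Submodule.smul_mem_smul (hs ▸ Submodule.subset_span ha) trivial

lemma supp_of_mem_S {I : ℕ → Ideal A}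
    (S : Submodule A ((n : ℕ) → A ⧸ I n))
    (hS : S = ⨆ n, LinearMap.range (LinearMap.single A (fun n => A ⧸ I n) n)) :
    ∀ x ∈ S, ∃ N : ℕ, ∀ n ≥ N, x n = 0 := by
  intro x hx
  rw [hS] at hx
  refine Submodule.iSup_induction (motive := fun x => ∃ N : ℕ, ∀ n ≥ N, x n = 0) _ hx ?_
    ⟨0, fun n _ => rfl⟩ ?_
  · rintro k x ⟨v, rfl⟩
    refine ⟨k + 1, fun n hn => ?_⟩
    rw [LinearMap.coe_single]
    exact @Pi.single_eq_of_ne ℕ (fun n => A ⧸ I n) _ _ k n (show n ≠ k by omega) v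
  · rintro x y ⟨N₁, h₁⟩ ⟨N₂, h₂⟩
    exact ⟨max N₁ N₂, fun n hn => by
      simp [Pi.add_apply, h₁ n (le_trans (le_max_left _ _) hn),
        h₂ n (le_trans (le_max_right _ _) hn)]⟩
end helpers

/-- The submodule of `P = ∏ₙ A/Iₙ` consisting of sequences `(aₙ + Iₙ)ₙ` with `aₙ → 0` in
the `m`-adic topology: for each `i`, the `n`-th coordinate lies in `mⁱ·(A/Iₙ)` for all
sufficiently large `n`. -/
def nullSequencesQuot (A : Type u) [CommRing A] (m : Ideal A) (I : ℕ → Ideal A) :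
    Submodule A ((n : ℕ) → A ⧸ I n) where
  carrier := {a | ∀ i : ℕ, ∃ N : ℕ, ∀ n ≥ N, a n ∈ (m ^ i • (⊤ : Submodule A (A ⧸ I n)))}
  add_mem' := by
    intro a b ha hb i
    obtain ⟨N₁, h₁⟩ := ha i
    obtain ⟨N₂, h₂⟩ := hb i
    exact ⟨max N₁ N₂, fun n hn =>
      add_mem (h₁ n (le_trans (le_max_left _ _) hn)) (h₂ n (le_trans (le_max_right _ _) hn))⟩
  zero_mem' := fun i => ⟨0, fun n _ => zero_mem _⟩
  smul_mem' := by
    intro c a ha i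
    obtain ⟨N, h⟩ := ha i
    exact ⟨N, fun n hn => Submodule.smul_mem _ c (h n hn)⟩

lemma mem_nullSequencesQuot {A : Type u} [CommRing A] {m : Ideal A} {I : ℕ → Ideal A}
    {a : (n : ℕ) → A ⧸ I n} :
    a ∈ nullSequencesQuot A m I ↔
      ∀ i : ℕ, ∃ N : ℕ, ∀ n ≥ N, a n ∈ m ^ i • (⊤ : Submodule A (A ⧸ I n)) := Iff.rfl

/-- Let `(A, m)` be a Noetherian local domain, `I₁, I₂, …` nonzero ideals with `lim Iₙ = 0`
`m`-adically, `P = ∏ₙ A/Iₙ`, `S = ⊕ₙ A/Iₙ`.  Then the `m`-adic closure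
`S̄ = ⋂ᵣ (S + mʳP)` of `S` in `P` is exactly the submodule of null sequences, and `P/S̄` is
a flat `A`-module. -/
theorem closure_eq_nullSequences_and_flat
    {A : Type u} [CommRing A] [IsDomain A] [IsNoetherianRing A] [IsLocalRing A]
    (I : ℕ → Ideal A) (hne : ∀ n, I n ≠ ⊥)
    (hlim : ∀ i : ℕ, ∃ N : ℕ, ∀ n ≥ N, I n ≤ IsLocalRing.maximalIdeal A ^ i)
    (S : Submodule A ((n : ℕ) → A ⧸ I n))
    (hS : S = ⨆ n, LinearMap.range (LinearMap.single A (fun n => A ⧸ I n) n)) :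
    (⨅ r : ℕ,
        S ⊔ IsLocalRing.maximalIdeal A ^ r • (⊤ : Submodule A ((n : ℕ) → A ⧸ I n)))
      = nullSequencesQuot A (IsLocalRing.maximalIdeal A) I ∧
    Module.Flat A (((n : ℕ) → A ⧸ I n) ⧸
      nullSequencesQuot A (IsLocalRing.maximalIdeal A) I) := by
  set m := IsLocalRing.maximalIdeal A with hm
  constructor
  · apply le_antisymm
    · intro x hx
      rw [Submodule.mem_iInf] at hx
      rw [mem_nullSequencesQuot]
      intro i
      obtain ⟨y, hy, z, hz, hxyz⟩ := Submodule.mem_sup.mp (hx i)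
      obtain ⟨N, hN⟩ := supp_of_mem_S S hS y hy
      refine ⟨N, fun n hn => ?_⟩
      have hxz : x n = z n := by rw [← hxyz]; simp [hN n hn]
      rw [hxz]
      have h1 : z n ∈ (m ^ i • (⊤ : Submodule A ((k : ℕ) → A ⧸ I k))).map
          (LinearMap.proj (R := A) (φ := fun k => A ⧸ I k) n) := Submodule.mem_map_of_mem hz
      rw [Submodule.map_smul''] at h1
      exact Submodule.smul_mono le_rfl le_top h1
    · intro x hx
      rw [mem_nullSequencesQuot] at hx
      rw [Submodule.mem_iInf]
      intro r
      obtain ⟨N, hN⟩ := hx r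
      classical
      set y : (n : ℕ) → A ⧸ I n :=
        ∑ k ∈ Finset.range N, LinearMap.single A (fun n => A ⧸ I n) k (x k) with hy
      have hyS : y ∈ S := by
        rw [hS]
        exact Submodule.sum_mem _ fun k _ =>
          Submodule.mem_iSup_of_mem k ⟨x k, rfl⟩
      have hyval : ∀ n, y n = if n < N then x n else 0 := by
        intro n
        rw [hy, Finset.sum_apply]
        by_cases h : n < N
        · rw [if_pos h]
          rw [Finset.sum_eq_single n (fun k _ hk => ?_) (fun h' => absurd (Finset.mem_range.mpr h) h')]
          · rw [LinearMap.coe_single, Pi.single_eq_same]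
          · rw [LinearMap.coe_single]
            exact @Pi.single_eq_of_ne ℕ (fun n => A ⧸ I n) _ _ k n (Ne.symm hk) _
        · rw [if_neg h]
          apply Finset.sum_eq_zero
          intro k hk
          rw [LinearMap.coe_single]
          exact @Pi.single_eq_of_ne ℕ (fun n => A ⧸ I n) _ _ k n
            (by simp at hk; omega) _
      refine Submodule.mem_sup.mpr ⟨y, hyS, x - y, ?_, by ring⟩
      apply pi_mem_smul _ (IsNoetherian.noetherian _)
      intro n
      rw [Pi.sub_apply, hyval n]
      by_cases h : n < N
      · rw [if_pos h, sub_self]; exact zero_mem _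
      · rw [if_neg h, sub_zero]
        exact hN n (by omega)
  · classical
    set P := (n : ℕ) → A ⧸ I n with hP
    set Nul := nullSequencesQuot A m I with hNul
    apply Module.Flat.of_forall_isTrivialRelation
    suffices H : ∀ {ι : Type} [Fintype ι] (f : ι → A) (x : ι → P ⧸ Nul),
        ∑ i, f i • x i = 0 → Module.IsTrivialRelation f x from fun {_} {_} {_} hfx => H _ _ hfx
    intro ι _ f x hfx
    -- lift x to P
    choose X hX using fun i => Submodule.Quotient.mk_surjective Nul (x i)
    set z : P := ∑ i, f i • X i with hzdef
    have hzN : z ∈ Nul := by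
      rw [← Submodule.Quotient.mk_eq_zero Nul]
      have : (Submodule.Quotient.mk z : P ⧸ Nul) = Nul.mkQ z := rfl
      rw [this, hzdef, map_sum]
      simp only [map_smul, Submodule.mkQ_apply, hX]
      exact hfx
    -- lift coordinates to A
    choose L hL using fun (i : ι) (n : ℕ) => Submodule.Quotient.mk_surjective (I n) (X i n)
    set J : Ideal A := Ideal.span (Set.range f) with hJdef
    set w : ℕ → A := fun n => ∑ i, f i * L i n with hwdef
    have hwJ : ∀ n, w n ∈ J := fun n => Submodule.sum_mem _ fun i _ =>
      J.mul_mem_right _ (Ideal.subset_span ⟨i, rfl⟩)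
    -- the lift map Φ
    set Φ : (ℕ → A) →ₗ[A] P := LinearMap.pi (fun n => (I n).mkQ ∘ₗ LinearMap.proj n) with hΦ
    have hΦapp : ∀ (c : ℕ → A) (n : ℕ), Φ c n = Submodule.Quotient.mk (c n) := fun c n => rfl
    have hwz : ∀ n, (Submodule.Quotient.mk (w n) : A ⧸ I n) = z n := by
      intro n
      have h1 : z n = ∑ i, f i • X i n := by
        rw [hzdef, Finset.sum_apply]; rfl
      rw [h1, hwdef]
      have h2 : (Submodule.Quotient.mk (∑ i, f i * L i n) : A ⧸ I n)
          = (I n).mkQ (∑ i, f i • L i n) := by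
        simp [smul_eq_mul]
      rw [h2, map_sum]
      simp only [map_smul, Submodule.mkQ_apply, hL]
    -- combined bounds
    have hcomb : ∀ r : ℕ, ∃ N, ∀ n ≥ N,
        z n ∈ m ^ r • (⊤ : Submodule A (A ⧸ I n)) ∧ I n ≤ m ^ r := by
      intro r
      obtain ⟨N₁, h₁⟩ := (mem_nullSequencesQuot.mp hzN) r
      obtain ⟨N₂, h₂⟩ := hlim r
      exact ⟨max N₁ N₂, fun n hn => ⟨h₁ n (le_trans (le_max_left _ _) hn),
        h₂ n (le_trans (le_max_right _ _) hn)⟩⟩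
    choose φ hφ using hcomb
    set ρ : ℕ → ℕ := fun n => (Finset.range (n + 1)).sup fun r => if φ r ≤ n then r else 0
      with hρdef
    have hρ1 : ∀ n, w n ∈ m ^ ρ n := by
      intro n
      obtain ⟨r₀, _, hr₀⟩ := Finset.exists_mem_eq_sup (Finset.range (n + 1))
        ⟨0, by simp⟩ (fun r => if φ r ≤ n then r else 0)
      have hval : ρ n = if φ r₀ ≤ n then r₀ else 0 := hr₀
      rw [hval]
      by_cases h : φ r₀ ≤ n
      · rw [if_pos h]
        obtain ⟨hz', hI'⟩ := hφ r₀ n h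
        obtain ⟨y, hy, hyz⟩ := mem_smul_top_quot'.mp hz'
        have hsub : w n - y ∈ I n := by
          refine (Submodule.Quotient.eq (I n)).mp ?_
          rw [hyz, hwz n]
        have : w n = y + (w n - y) := by ring
        rw [this]
        exact add_mem hy (hI' hsub)
      · rw [if_neg h, pow_zero, Ideal.one_eq_top]; trivial
    have hρ2 : ∀ r, ∃ N, ∀ n ≥ N, r ≤ ρ n := by
      intro r
      refine ⟨max (φ r) r, fun n hn => ?_⟩
      have h1 : φ r ≤ n := le_trans (le_max_left _ _) hn
      have h2 : r ≤ n := le_trans (le_max_right _ _) hn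
      have h3 : (if φ r ≤ n then r else 0) ≤ ρ n :=
        Finset.le_sup (f := fun r => if φ r ≤ n then r else 0)
          (Finset.mem_range.mpr (Nat.lt_succ_of_le h2))
      rwa [if_pos h1] at h3
    -- Artin-Rees
    obtain ⟨k₀, hk₀⟩ := Ideal.exists_pow_inf_eq_pow_smul m (J : Submodule A A)
    have hwsmul : ∀ n, w n ∈ m ^ (ρ n - k₀) • (J : Submodule A A) := by
      intro n
      by_cases h : k₀ ≤ ρ n
      · have htop : m ^ ρ n • (⊤ : Submodule A A) = m ^ ρ n := by
          rw [Ideal.smul_eq_mul, Ideal.mul_top]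
        have h1 : w n ∈ m ^ ρ n • (⊤ : Submodule A A) ⊓ (J : Submodule A A) :=
          Submodule.mem_inf.mpr ⟨by rw [htop]; exact hρ1 n, hwJ n⟩
        rw [hk₀ (ρ n) h] at h1
        exact Submodule.smul_mono le_rfl inf_le_right h1
      · rw [Nat.sub_eq_zero_of_le (le_of_not_ge h), pow_zero, Ideal.one_eq_top,
          Submodule.top_smul]
        exact hwJ n
    have hsum : ∀ n, ∃ v : ι →₀ A, (∀ i, v i ∈ m ^ (ρ n - k₀)) ∧
        (v.sum fun i c => c • f i) = w n := by
      intro n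
      have h := hwsmul n
      rw [hJdef] at h
      obtain ⟨v, hv1, hv2⟩ :=
        (Submodule.mem_ideal_smul_span_iff_exists_sum (m ^ (ρ n - k₀)) f (w n)).mp h
      exact ⟨v, hv1, hv2⟩
    choose u hu1 hu2 using hsum
    set Y : ι → ℕ → A := fun i n => L i n - u n i with hYdef
    have hufin : ∀ n, (∑ i, f i * u n i) = w n := by
      intro n
      rw [← hu2 n, Finsupp.sum_fintype _ _ (fun i => zero_smul A (f i))]
      exact Finset.sum_congr rfl fun i _ => by rw [smul_eq_mul, mul_comm]
    have hYker : ∀ n, ∑ i, f i * Y i n = 0 := by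
      intro n
      have : ∑ i, f i * Y i n = (∑ i, f i * L i n) - ∑ i, f i * u n i := by
        rw [← Finset.sum_sub_distrib]
        exact Finset.sum_congr rfl fun i _ => by rw [hYdef]; ring
      rw [this, hufin n, hwdef, sub_self]
    -- the syzygy module
    set T : (ι → A) →ₗ[A] A :=
      { toFun := fun v => ∑ i, f i * v i,
        map_add' := fun v w => by simp [mul_add, Finset.sum_add_distrib],
        map_smul' := fun c v => by
          simp only [Pi.smul_apply, smul_eq_mul, RingHom.id_apply, Finset.mul_sum]
          exact Finset.sum_congr rfl fun i _ => by ring } with hT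
    obtain ⟨s, hs⟩ := IsNoetherian.noetherian (LinearMap.ker T)
    have hYmem : ∀ n, (fun i => Y i n) ∈ LinearMap.ker T := fun n =>
      LinearMap.mem_ker.mpr (hYker n)
    have hgex : ∀ n, ∃ g : (ι → A) → A, ∑ v ∈ s, g v • v = fun i => Y i n := fun n =>
      (Submodule.mem_span_finset.mp (by rw [hs]; exact hYmem n)).imp fun _ h => h.2
    choose g hg using hgex
    -- the trivialization
    refine ⟨Fintype.card {v // v ∈ s}, fun i j => (((Fintype.equivFin _).symm j : {v // v ∈ s}) : ι → A) i,
      fun j => Nul.mkQ (Φ (fun n => g n (((Fintype.equivFin _).symm j : {v // v ∈ s}) : ι → A))), ?_, ?_⟩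
    · intro i
      set Ψ : (ℕ → A) →ₗ[A] P ⧸ Nul := Nul.mkQ ∘ₗ Φ with hΨ
      have hUnull : Φ (fun n => u n i) ∈ Nul := by
        rw [mem_nullSequencesQuot]
        intro r
        obtain ⟨N, hN⟩ := hρ2 (r + k₀)
        refine ⟨N, fun n hn => ?_⟩
        rw [hΦapp]
        refine mem_smul_top_quot'.mpr ⟨u n i, ?_, rfl⟩
        have hle : m ^ (ρ n - k₀) ≤ m ^ r :=
          Ideal.pow_le_pow_right (by have := hN n hn; omega)
        exact hle (hu1 n i)
      have hXeq : X i = Φ (fun n => L i n) := by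
        funext n
        rw [hΦapp]
        exact (hL i n).symm
      have hinner : (∑ v ∈ s.attach, (v : ι → A) i • (fun n => g n (v : ι → A)))
          = fun n => Y i n := by
        funext n
        rw [Finset.sum_apply]
        have h1 := congrFun (hg n) i
        rw [Finset.sum_apply] at h1
        calc ∑ v ∈ s.attach, ((v : ι → A) i • fun k => g k (v : ι → A)) n
            = ∑ v ∈ s.attach, (v : ι → A) i * g n (v : ι → A) := rfl
          _ = ∑ v ∈ s, v i * g n v := Finset.sum_attach s (fun v => v i * g n v)
          _ = ∑ v ∈ s, (g n v • v) i := by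
              exact Finset.sum_congr rfl fun v _ => by
                rw [Pi.smul_apply, smul_eq_mul, mul_comm]
          _ = Y i n := h1
      have hsplit : Φ (fun n => L i n) = Φ (fun n => Y i n) + Φ (fun n => u n i) := by
        rw [← map_add]
        congr 1
        funext n
        simp [hYdef]
      have hzero : Nul.mkQ (Φ (fun n => u n i)) = 0 := by
        rw [Submodule.mkQ_apply]
        exact (Submodule.Quotient.mk_eq_zero Nul).mpr hUnull
      calc x i = Nul.mkQ (X i) := (hX i).symm
        _ = Ψ (fun n => Y i n) := by
            rw [hXeq, hsplit, map_add, hzero, add_zero]; rfl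
        _ = ∑ v : {v // v ∈ s}, (v : ι → A) i • Nul.mkQ (Φ (fun n => g n (v : ι → A))) := by
            rw [← hinner, Finset.univ_eq_attach, map_sum]
            exact Finset.sum_congr rfl fun v _ => by rw [map_smul]; rfl
        _ = _ := (Equiv.sum_comp (Fintype.equivFin {v // v ∈ s}).symm
              (fun v => (v : ι → A) i • Nul.mkQ (Φ (fun n => g n (v : ι → A))))).symm
    · intro j
      beta_reduce
      generalize (Fintype.equivFin {v // v ∈ s}).symm j = v
      have hvK : (v : ι → A) ∈ LinearMap.ker T := hs ▸ Submodule.subset_span v.2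
      exact LinearMap.mem_ker.mp hvK
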